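/- Let G be a d-regular graph on n vertices whose adjacency matrix has second largest absolute eigenvalue λ. Then for every nonempty set X of vertices, |N(X) ∪ X| ≥ d²|X| / (λ² + (d² − λ²)|X|/n), where N(X) denotes the neighborhood of X (Tanner's bound). -/

import Mathlib

open Finset

/-- External neighborhood: vertices outside `A` with a neighbor in `A`. -/
def extNbhd {V : Type*} [Fintype V] [DecidableEq V] (G : SimpleGraph V)
    [DecidableRel G.Adj] (A : Finset V) : Finset V :=
  Finset.univ.filter (fun v => v ∉ A ∧ ∃ a ∈ A, G.Adj a v)

/-- Tanner's bound: let `G` be `d`-regular on `n` vertices whose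
adjacency matrix has second largest absolute eigenvalue `lam` (expressed by: the
adjacency operator contracts, by a factor `lam`, every vector orthogonal to the
all-ones vector). Then for every nonempty vertex set `X`,
`|X ∪ N(X)| ≥ d²|X| / (lam² + (d² − lam²)|X|/n)`. -/
theorem stmt13 {V : Type*} [Fintype V] [DecidableEq V] (G : SimpleGraph V)
    [DecidableRel G.Adj] (d : ℕ) (lam : ℝ)
    (hreg : G.IsRegularOfDegree d)
    (hlam : ∀ x : V → ℝ, (∑ v, x v) = 0 →
      ∑ v, ((G.adjMatrix ℝ).mulVec x v) ^ 2 ≤ lam ^ 2 * ∑ v, (x v) ^ 2)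
    (X : Finset V) (hX : X.Nonempty) :
    ((d : ℝ) ^ 2 * X.card) /
        (lam ^ 2 + ((d : ℝ) ^ 2 - lam ^ 2) * X.card / (Fintype.card V)) ≤
      ((X ∪ extNbhd G X).card : ℝ) := by
  classical
  rcases Nat.eq_zero_or_pos d with hd0 | hdpos
  · subst hd0
    simp only [Nat.cast_zero, ne_eq, OfNat.ofNat_ne_zero, not_false_eq_true, zero_pow,
      zero_mul, zero_div]
    positivity
  set n : ℕ := Fintype.card V with hn
  have hnpos : 0 < (n : ℝ) := by
    have : 0 < n := Fintype.card_pos_iff.mpr ⟨hX.choose⟩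
    exact_mod_cast this
  set Y : Finset V := X ∪ extNbhd G X with hY
  set f : V → ℝ := fun v => if v ∈ X then 1 else 0 with hf
  set M : V → ℝ := (G.adjMatrix ℝ).mulVec f with hM
  have hsumf : ∑ v, f v = X.card := by
    simp [hf, Finset.sum_ite_mem, Finset.inter_comm]
  have hMv : ∀ v, M v = ∑ u ∈ G.neighborFinset v, f u := by
    intro v; simp [hM]
  -- column sums of adjacency matrix are d
  have hcol : ∀ u : V, ∑ v, (G.adjMatrix ℝ) v u = d := by
    intro u
    have : ∑ v, (G.adjMatrix ℝ) v u = (G.degree u : ℝ) := by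
      simp [SimpleGraph.adjMatrix, SimpleGraph.degree, SimpleGraph.neighborFinset,
        Finset.sum_boole, SimpleGraph.adj_comm]
    rw [this, hreg u]
  have hrow : ∀ v : V, ∑ u, (G.adjMatrix ℝ) v u = d := by
    intro v
    have : ∑ u, (G.adjMatrix ℝ) v u = (G.degree v : ℝ) := by
      simp [SimpleGraph.adjMatrix, SimpleGraph.degree, SimpleGraph.neighborFinset,
        Finset.sum_boole]
    rw [this, hreg v]
  have hsumM : ∑ v, M v = d * X.card := by
    have : ∑ v, M v = ∑ u, (∑ v, (G.adjMatrix ℝ) v u) * f u := by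
      simp only [hM, Matrix.mulVec, dotProduct]
      rw [Finset.sum_comm]
      exact Finset.sum_congr rfl fun u _ => (Finset.sum_mul _ _ _).symm
    rw [this]
    simp_rw [hcol]
    rw [← Finset.mul_sum, hsumf]
  have hMzero : ∀ v ∉ Y, M v = 0 := by
    intro v hv
    rw [hMv]
    apply Finset.sum_eq_zero
    intro u hu
    rw [SimpleGraph.mem_neighborFinset] at hu
    simp only [hY, Finset.mem_union, extNbhd, Finset.mem_filter, Finset.mem_univ,
      true_and, not_or, not_and, not_exists] at hv
    have hvX : v ∉ X := hv.1
    have huX : u ∉ X := by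
      intro huX
      exact (hv.2 hvX) u huX hu.symm
    simp [hf, huX]
  have hMnonpos_sum : ∑ v ∈ Y, M v = ∑ v, M v := by
    apply Finset.sum_subset (Finset.subset_univ Y)
    intro v _ hv; exact hMzero v hv
  -- Cauchy–Schwarz
  have hCS : ((d : ℝ) * X.card) ^ 2 ≤ (Y.card : ℝ) * ∑ v, (M v) ^ 2 := by
    have h1 : (∑ v ∈ Y, 1 * M v) ^ 2 ≤ (∑ v ∈ Y, (1 : ℝ) ^ 2) * ∑ v ∈ Y, (M v) ^ 2 :=
      Finset.sum_mul_sq_le_sq_mul_sq Y (fun _ => 1) M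
    simp only [one_mul, one_pow, Finset.sum_const, nsmul_eq_mul, mul_one] at h1
    have h2 : ∑ v ∈ Y, (M v) ^ 2 ≤ ∑ v, (M v) ^ 2 :=
      Finset.sum_le_sum_of_subset_of_nonneg (Finset.subset_univ Y)
        (fun v _ _ => sq_nonneg _)
    calc ((d : ℝ) * X.card) ^ 2 = (∑ v ∈ Y, M v) ^ 2 := by rw [hMnonpos_sum, hsumM]
      _ ≤ (Y.card : ℝ) * ∑ v ∈ Y, (M v) ^ 2 := h1
      _ ≤ (Y.card : ℝ) * ∑ v, (M v) ^ 2 := by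
          apply mul_le_mul_of_nonneg_left h2 (by positivity)
  -- spectral bound on ∑ M²
  set t : ℝ := (X.card : ℝ) / n with ht
  set x : V → ℝ := fun v => f v - t with hx
  have hx0 : ∑ v, x v = 0 := by
    simp only [hx, Finset.sum_sub_distrib, hsumf, Finset.sum_const, nsmul_eq_mul,
      Finset.card_univ, ht]
    field_simp
    simp [hn]
  have hAx : ∀ v, (G.adjMatrix ℝ).mulVec x v = M v - d * t := by
    intro v
    simp only [hx, hM, Matrix.mulVec, dotProduct, mul_sub, Finset.sum_sub_distrib]
    congr 1
    rw [← Finset.sum_mul, hrow]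
  have hsumx2 : ∑ v, (x v) ^ 2 = (X.card : ℝ) - 2 * t * X.card + n * t ^ 2 := by
    have hf2 : ∀ v, (f v) ^ 2 = f v := by
      intro v; simp only [hf]; split <;> norm_num
    simp only [hx, sub_sq]
    rw [Finset.sum_add_distrib, Finset.sum_sub_distrib]
    simp_rw [hf2]
    rw [hsumf, Finset.sum_const, Finset.card_univ, ← hn, nsmul_eq_mul]
    rw [← Finset.sum_mul, ← Finset.mul_sum]
    rw [hsumf]
    ring_nf
  have hsumAx : ∑ v, ((G.adjMatrix ℝ).mulVec x v) = 0 := by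
    simp_rw [hAx]
    rw [Finset.sum_sub_distrib, hsumM, Finset.sum_const, Finset.card_univ, ← hn,
      nsmul_eq_mul, ht]
    field_simp
    simp
  have hM2 : ∑ v, (M v) ^ 2 =
      (∑ v, ((G.adjMatrix ℝ).mulVec x v) ^ 2) + n * ((d : ℝ) * t) ^ 2 := by
    have : ∀ v, (M v) ^ 2 = ((G.adjMatrix ℝ).mulVec x v) ^ 2
        + 2 * ((d : ℝ) * t) * ((G.adjMatrix ℝ).mulVec x v) + ((d : ℝ) * t) ^ 2 := by
      intro v
      have := hAx v
      have hMval : M v = (G.adjMatrix ℝ).mulVec x v + (d : ℝ) * t := by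
        rw [this]; ring
      rw [hMval]; ring
    simp_rw [this]
    rw [Finset.sum_add_distrib, Finset.sum_add_distrib, ← Finset.mul_sum, hsumAx,
      Finset.sum_const, Finset.card_univ, ← hn, nsmul_eq_mul]
    ring
  have hspec : ∑ v, (M v) ^ 2 ≤
      lam ^ 2 * ((X.card : ℝ) - 2 * t * X.card + n * t ^ 2) + n * ((d : ℝ) * t) ^ 2 := by
    rw [hM2]
    have := hlam x hx0
    rw [hsumx2] at this
    linarith
  -- algebraic simplifications
  have hXn : (X.card : ℝ) ≤ n := by
    exact_mod_cast Finset.card_le_card (Finset.subset_univ X)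
  have hXpos : 0 < (X.card : ℝ) := by
    exact_mod_cast Finset.card_pos.mpr hX
  have htnX : (n : ℝ) * t = X.card := by rw [ht]; field_simp
  have hkey : (X.card : ℝ) - 2 * t * X.card + n * t ^ 2 = X.card * (1 - t) := by
    have : (n : ℝ) * t ^ 2 = X.card * t := by
      rw [pow_two, ← mul_assoc, htnX]
    rw [this]; ring
  set D : ℝ := lam ^ 2 + ((d : ℝ) ^ 2 - lam ^ 2) * X.card / n with hD
  have hDalt : D = lam ^ 2 * (1 - t) + (d : ℝ) ^ 2 * t := by
    rw [hD, ht]; field_simp; ring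
  have hDpos : 0 < D := by
    rw [hDalt]
    have h1 : 0 ≤ lam ^ 2 * (1 - t) := by
      apply mul_nonneg (sq_nonneg _)
      rw [ht]
      rw [sub_nonneg, div_le_one hnpos]
      exact hXn
    have h2 : 0 < (d : ℝ) ^ 2 * t := by
      apply mul_pos
      · have : 0 < (d : ℝ) := by exact_mod_cast hdpos
        positivity
      · rw [ht]; positivity
    linarith
  have hbound : ∑ v, (M v) ^ 2 ≤ X.card * D := by
    have hnd : (n : ℝ) * ((d : ℝ) * t) ^ 2 = (d : ℝ) ^ 2 * t * X.card := by
      have : (n : ℝ) * t ^ 2 = X.card * t := by rw [pow_two, ← mul_assoc, htnX]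
      calc (n : ℝ) * ((d : ℝ) * t) ^ 2 = (d : ℝ) ^ 2 * ((n : ℝ) * t ^ 2) := by ring
        _ = (d : ℝ) ^ 2 * (X.card * t) := by rw [this]
        _ = (d : ℝ) ^ 2 * t * X.card := by ring
    calc ∑ v, (M v) ^ 2
        ≤ lam ^ 2 * ((X.card : ℝ) - 2 * t * X.card + n * t ^ 2) + n * ((d : ℝ) * t) ^ 2 :=
          hspec
      _ = lam ^ 2 * (X.card * (1 - t)) + (d : ℝ) ^ 2 * t * X.card := by rw [hkey, hnd]
      _ = X.card * D := by rw [hDalt]; ring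
  -- combine
  rw [div_le_iff₀ hDpos]
  have hmain : ((d : ℝ) * X.card) ^ 2 ≤ (Y.card : ℝ) * (X.card * D) := by
    calc ((d : ℝ) * X.card) ^ 2 ≤ (Y.card : ℝ) * ∑ v, (M v) ^ 2 := hCS
      _ ≤ (Y.card : ℝ) * (X.card * D) := by
          apply mul_le_mul_of_nonneg_left hbound (by positivity)
  have := (mul_le_mul_iff_left₀ hXpos).mpr (le_refl (1 : ℝ))
  nlinarith [hmain, hXpos]
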